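/- With the trajectory setup and x₀ fixed, view the total reward R = Σ_{t=0}^{F−1} γᵗ r(x_t, a_t) as a function of the whole action tuple (a₀, …, a_{F−1}) ∈ (ℝᵐ)^F. Then R is differentiable at (a₀, …, a_{F−1}), and for each 0 ≤ t < F the block of its derivative corresponding to a_t equals γᵗ ( ∇_a r(x_t, a_t) + γ (D_a f(x_t, a_t))ᵀ ∇R_{t+1}(x_{t+1}) ), where R_{t+1} is the reward-to-go function of the state determined by the fixed actions a_{t+1}, …, a_{F−1}. -/

import Mathlib

open Matrix

/-- Gradient of a scalar function, as a vector of partial derivatives. -/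
noncomputable def grad {k : ℕ} (g : (Fin k → ℝ) → ℝ) (x : Fin k → ℝ) : Fin k → ℝ :=
  fun i => fderiv ℝ g x (Pi.single i 1)

/-- Gradient of `r` in the action variable. -/
noncomputable def gradA {n m : ℕ} (r : (Fin n → ℝ) × (Fin m → ℝ) → ℝ)
    (x : Fin n → ℝ) (a : Fin m → ℝ) : Fin m → ℝ :=
  fun i => fderiv ℝ (fun b => r (x, b)) a (Pi.single i 1)

/-- Jacobian of `f` in the action variable (rows indexed by output components). -/
noncomputable def jacA {n m : ℕ} (f : (Fin n → ℝ) × (Fin m → ℝ) → Fin n → ℝ)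
    (x : Fin n → ℝ) (a : Fin m → ℝ) : Matrix (Fin n) (Fin m) ℝ :=
  Matrix.of fun j i => fderiv ℝ (fun b => f (x, b) j) a (Pi.single i 1)

/-- Extend a finite action tuple to all of `ℕ` (by `0` beyond `F`). -/
noncomputable def pad {F m : ℕ} (as : Fin F → Fin m → ℝ) : ℕ → Fin m → ℝ :=
  fun t => if h : t < F then as ⟨t, h⟩ else 0

/-- The trajectory generated from `x₀` by the actions `as`. -/
def traj {n m : ℕ} (f : (Fin n → ℝ) × (Fin m → ℝ) → Fin n → ℝ)
    (x₀ : Fin n → ℝ) (as : ℕ → Fin m → ℝ) : ℕ → Fin n → ℝ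
  | 0 => x₀
  | t + 1 => f (traj f x₀ as t, as t)

/-- The total (discounted) reward, as a function of the whole action tuple. -/
noncomputable def Rtot {n m : ℕ} (F : ℕ) (γ : ℝ)
    (f : (Fin n → ℝ) × (Fin m → ℝ) → Fin n → ℝ)
    (r : (Fin n → ℝ) × (Fin m → ℝ) → ℝ)
    (x₀ : Fin n → ℝ) (as : Fin F → Fin m → ℝ) : ℝ :=
  ∑ t ∈ Finset.range F, γ ^ t * r (traj f x₀ (pad as) t, pad as t)

section Aux
variable {n m : ℕ} (f : (Fin n → ℝ) × (Fin m → ℝ) → Fin n → ℝ)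

lemma traj_congr (x₀ : Fin n → ℝ) (as as' : ℕ → Fin m → ℝ) :
    ∀ s, (∀ u < s, as u = as' u) → traj f x₀ as s = traj f x₀ as' s := by
  intro s
  induction s with
  | zero => intro _; rfl
  | succ s ih =>
    intro h
    show f (traj f x₀ as s, as s) = f (traj f x₀ as' s, as' s)
    rw [ih (fun u hu => h u (hu.trans (Nat.lt_succ_self s))), h s (Nat.lt_succ_self s)]

lemma traj_add (x₀ : Fin n → ℝ) (as : ℕ → Fin m → ℝ) (u : ℕ) :
    ∀ j, traj f x₀ as (u + j) = traj f (traj f x₀ as u) (fun i => as (u + i)) j := by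
  intro j
  induction j with
  | zero => rfl
  | succ j ih =>
    show f (traj f x₀ as (u + j), as (u + j)) = _
    rw [ih]; rfl

lemma traj_diff_state (hf : ContDiff ℝ 1 f) (as : ℕ → Fin m → ℝ) (j : ℕ) :
    Differentiable ℝ (fun y => traj f y as j) := by
  induction j with
  | zero => exact differentiable_id
  | succ j ih =>
    exact (hf.differentiable one_ne_zero).comp (ih.prodMk (differentiable_const _))

lemma pad_diff {F : ℕ} (u : ℕ) :
    Differentiable ℝ (fun as : Fin F → Fin m → ℝ => pad as u) := by
  unfold pad
  by_cases h : u < F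
  · simp only [dif_pos h]
    exact (ContinuousLinearMap.proj (R := ℝ) (φ := fun _ : Fin F => Fin m → ℝ)
      (⟨u, h⟩ : Fin F)).differentiable
  · simp only [dif_neg h]
    exact differentiable_const _

lemma traj_diff_actions {F : ℕ} (hf : ContDiff ℝ 1 f) (x₀ : Fin n → ℝ) (s : ℕ) :
    Differentiable ℝ (fun as : Fin F → Fin m → ℝ => traj f x₀ (pad as) s) := by
  induction s with
  | zero => exact differentiable_const _
  | succ s ih =>
    exact (hf.differentiable one_ne_zero).comp (ih.prodMk (pad_diff s))
end Aux

section Rsum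
variable {n m : ℕ} {F : ℕ} {γ : ℝ}
    {f : (Fin n → ℝ) × (Fin m → ℝ) → Fin n → ℝ}
    {r : (Fin n → ℝ) × (Fin m → ℝ) → ℝ}
    {a : Fin F → Fin m → ℝ} {R : ℕ → (Fin n → ℝ) → ℝ}

lemma Rsum (hRF : ∀ y, R F y = 0)
    (hRrec : ∀ t < F, ∀ y, R t y = r (y, pad a t) + γ * R (t + 1) (f (y, pad a t))) :
    ∀ k u, u + k = F → ∀ y,
      R u y = ∑ j ∈ Finset.range k,
        γ ^ j * r (traj f y (fun i => pad a (u + i)) j, pad a (u + j)) := by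
  intro k
  induction k with
  | zero =>
    intro u hu y
    have : u = F := by omega
    subst this
    simp [hRF y]
  | succ k ih =>
    intro u hu y
    have hu' : u < F := by omega
    have hu1 : (u + 1) + k = F := by omega
    rw [hRrec u hu' y, Finset.sum_range_succ' (fun j =>
      γ ^ j * r (traj f y (fun i => pad a (u + i)) j, pad a (u + j))) k]
    have h0 : γ ^ 0 * r (traj f y (fun i => pad a (u + i)) 0, pad a (u + 0)) = r (y, pad a u) := by
      simp [traj]
    rw [h0]
    rw [ih (u + 1) hu1 (f (y, pad a u))]
    rw [add_comm, Finset.mul_sum]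
    congr 1
    apply Finset.sum_congr rfl
    intro j _
    have htr : traj f y (fun i => pad a (u + i)) (j + 1)
        = traj f (f (y, pad a u)) (fun i => pad a (u + 1 + i)) j := by
      have := traj_add f y (fun i => pad a (u + i)) 1 j
      simpa [traj, Nat.add_assoc, Nat.add_comm 1] using this
    rw [htr, show u + (j + 1) = u + 1 + j by omega]
    ring

lemma R_diff (hf : ContDiff ℝ 1 f) (hr : ContDiff ℝ 1 r)
    (hRF : ∀ y, R F y = 0)
    (hRrec : ∀ t < F, ∀ y, R t y = r (y, pad a t) + γ * R (t + 1) (f (y, pad a t)))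
    (u : ℕ) (hu : u ≤ F) : Differentiable ℝ (R u) := by
  have h := Rsum hRF hRrec (F - u) u (by omega)
  have heq : R u = fun y => ∑ j ∈ Finset.range (F - u),
      γ ^ j * r (traj f y (fun i => pad a (u + i)) j, pad a (u + j)) := funext h
  rw [heq]
  apply Differentiable.fun_sum
  intro j _
  exact ((hr.differentiable one_ne_zero).comp
    ((traj_diff_state f hf _ j).prodMk (differentiable_const _))).const_mul _
end Rsum


/-- differentiability of the total reward in the action tuple,
and the formula for the `a_t`-block of its derivative. -/
theorem stmt4 {n m : ℕ} (F : ℕ) (hF : 1 ≤ F) (γ : ℝ)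
    (f : (Fin n → ℝ) × (Fin m → ℝ) → Fin n → ℝ)
    (r : (Fin n → ℝ) × (Fin m → ℝ) → ℝ)
    (hf : ContDiff ℝ 1 f) (hr : ContDiff ℝ 1 r)
    (x₀ : Fin n → ℝ) (a : Fin F → Fin m → ℝ)
    (R : ℕ → (Fin n → ℝ) → ℝ)
    (hRF : ∀ y, R F y = 0)
    (hRrec : ∀ t < F, ∀ y, R t y = r (y, pad a t) + γ * R (t + 1) (f (y, pad a t))) :
    DifferentiableAt ℝ (Rtot F γ f r x₀) a ∧
    ∀ t : Fin F,
      (fun i => fderiv ℝ (Rtot F γ f r x₀) a (Pi.single t (Pi.single i 1))) =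
      γ ^ (t : ℕ) •
        (gradA r (traj f x₀ (pad a) t) (a t) +
          γ • (jacA f (traj f x₀ (pad a) t) (a t))ᵀ.mulVec
            (grad (R ((t : ℕ) + 1)) (traj f x₀ (pad a) ((t : ℕ) + 1)))) := by
  -- differentiability of Rtot
  have hdiff : Differentiable ℝ (Rtot F γ f r x₀) := by
    unfold Rtot
    apply Differentiable.fun_sum
    intro s _
    exact ((hr.differentiable one_ne_zero).comp
      ((traj_diff_actions f hf x₀ s).prodMk (pad_diff s))).const_mul _
  refine ⟨hdiff a, ?_⟩
  intro t
  set xt := traj f x₀ (pad a) (t : ℕ) with hxt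
  have htF : (t : ℕ) < F := t.isLt
  have hpad_t : pad a (t : ℕ) = a t := by
    simp [pad, htF]
  -- the restricted function g
  set g : (Fin m → ℝ) → ℝ := fun b => Rtot F γ f r x₀ (Function.update a t b) with hg_def
  -- the linear map single t
  set L : (Fin m → ℝ) →L[ℝ] (Fin F → Fin m → ℝ) :=
    ContinuousLinearMap.pi (Pi.single t (ContinuousLinearMap.id ℝ (Fin m → ℝ))) with hL_def
  have hLv : ∀ v : Fin m → ℝ, L v = Pi.single t v := by
    intro v
    funext s
    rcases eq_or_ne s t with h | h
    · subst h; simp [hL_def]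
    · simp [hL_def, Pi.single_eq_of_ne h]
  have hupd : HasFDerivAt (Function.update a t) L (a t) := hasFDerivAt_update a (a t)
  have hgF : HasFDerivAt g ((fderiv ℝ (Rtot F γ f r x₀) a).comp L) (a t) := by
    have h2 : HasFDerivAt (Rtot F γ f r x₀) (fderiv ℝ (Rtot F γ f r x₀) a)
        (Function.update a t (a t)) := by
      rw [Function.update_eq_self]
      exact (hdiff a).hasFDerivAt
    exact h2.comp (a t) hupd
  have key1 : ∀ v : Fin m → ℝ,
      fderiv ℝ (Rtot F γ f r x₀) a (Pi.single t v) = fderiv ℝ g (a t) v := by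
    intro v
    rw [hgF.fderiv]
    simp [ContinuousLinearMap.comp_apply, hLv v]
  -- explicit form of g
  set C : ℝ := ∑ s ∈ Finset.range (t : ℕ),
    γ ^ s * r (traj f x₀ (pad a) s, pad a s) with hC
  have g_eq : g = fun b => C + (γ ^ (t : ℕ) * r (xt, b)
      + γ ^ ((t : ℕ) + 1) * R ((t : ℕ) + 1) (f (xt, b))) := by
    funext b
    set a' := Function.update a t b with ha'
    have hpad_ne : ∀ s : ℕ, s ≠ (t : ℕ) → pad a' s = pad a s := by
      intro s hs
      unfold pad
      by_cases h : s < F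
      · simp only [dif_pos h]
        rw [ha', Function.update_of_ne]
        intro hctr
        exact hs (by rw [← hctr])
      · simp only [dif_neg h]
    have hpad_t' : pad a' (t : ℕ) = b := by
      simp [pad, htF, ha', Fin.eta]
    have hx'le : ∀ s, s ≤ (t : ℕ) → traj f x₀ (pad a') s = traj f x₀ (pad a) s := by
      intro s hs
      apply traj_congr
      intro u hu
      exact hpad_ne u (by omega)
    have hA : ∑ s ∈ Finset.range (t : ℕ), γ ^ s * r (traj f x₀ (pad a') s, pad a' s) = C := by
      rw [hC]
      apply Finset.sum_congr rfl
      intro s hs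
      have hs' : s < (t : ℕ) := Finset.mem_range.mp hs
      rw [hx'le s (le_of_lt hs'), hpad_ne s (by omega)]
    have hB : γ ^ (t : ℕ) * r (traj f x₀ (pad a') (t : ℕ), pad a' (t : ℕ))
        = γ ^ (t : ℕ) * r (xt, b) := by
      rw [hx'le (t : ℕ) le_rfl, hpad_t', hxt]
    have hT : ∑ s ∈ Finset.Ico ((t : ℕ) + 1) F, γ ^ s * r (traj f x₀ (pad a') s, pad a' s)
        = γ ^ ((t : ℕ) + 1) * R ((t : ℕ) + 1) (f (xt, b)) := by
      rw [Finset.sum_Ico_eq_sum_range,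
        Rsum hRF hRrec (F - ((t : ℕ) + 1)) ((t : ℕ) + 1) (by omega) (f (xt, b)),
        Finset.mul_sum]
      apply Finset.sum_congr rfl
      intro j _
      have hx'succ : traj f x₀ (pad a') ((t : ℕ) + 1) = f (xt, b) := by
        show f (traj f x₀ (pad a') (t : ℕ), pad a' (t : ℕ)) = f (xt, b)
        rw [hx'le (t : ℕ) le_rfl, hpad_t', hxt]
      have hshift : traj f x₀ (pad a') ((t : ℕ) + 1 + j)
          = traj f (f (xt, b)) (fun i => pad a ((t : ℕ) + 1 + i)) j := by
        rw [traj_add f x₀ (pad a') ((t : ℕ) + 1) j, hx'succ]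
        apply traj_congr
        intro u hu
        exact hpad_ne _ (by omega)
      rw [hshift, hpad_ne ((t : ℕ) + 1 + j) (by omega), pow_add]
      ring
    show (∑ s ∈ Finset.range F, γ ^ s * r (traj f x₀ (pad a') s, pad a' s)) = _
    rw [← Finset.sum_range_add_sum_Ico _ (show (t : ℕ) + 1 ≤ F by omega),
      Finset.sum_range_succ, hA, hB, hT]
    ring
  -- derivatives of the pieces
  have hrb : Differentiable ℝ (fun b : Fin m → ℝ => r (xt, b)) :=
    (hr.differentiable one_ne_zero).comp ((differentiable_const xt).prodMk differentiable_id)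
  have hfb : Differentiable ℝ (fun b : Fin m → ℝ => f (xt, b)) :=
    (hf.differentiable one_ne_zero).comp ((differentiable_const xt).prodMk differentiable_id)
  set D1 := fderiv ℝ (fun b => r (xt, b)) (a t) with hD1
  set Df := fderiv ℝ (fun b => f (xt, b)) (a t) with hDf
  have hRd : Differentiable ℝ (R ((t : ℕ) + 1)) :=
    R_diff hf hr hRF hRrec ((t : ℕ) + 1) (by omega)
  set DR := fderiv ℝ (R ((t : ℕ) + 1)) (f (xt, a t)) with hDR
  have hD1at : HasFDerivAt (fun b => r (xt, b)) D1 (a t) := (hrb (a t)).hasFDerivAt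
  have hDfat : HasFDerivAt (fun b => f (xt, b)) Df (a t) := (hfb (a t)).hasFDerivAt
  have hDRat : HasFDerivAt (R ((t : ℕ) + 1)) DR (f (xt, a t)) := (hRd _).hasFDerivAt
  have hgD : HasFDerivAt g
      (γ ^ (t : ℕ) • D1 + γ ^ ((t : ℕ) + 1) • (DR.comp Df)) (a t) := by
    rw [g_eq]
    exact ((hD1at.const_mul (γ ^ (t : ℕ))).add
      (((hDRat.comp (a t) hDfat)).const_mul (γ ^ ((t : ℕ) + 1)))).const_add C
  -- trajectory at t+1
  have hx1 : traj f x₀ (pad a) ((t : ℕ) + 1) = f (xt, a t) := by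
    show f (traj f x₀ (pad a) (t : ℕ), pad a (t : ℕ)) = f (xt, a t)
    rw [hpad_t, hxt]
  -- final computation
  funext i
  rw [key1, hgD.fderiv]
  have hDfcomp : ∀ j : Fin n, Df (Pi.single i 1) j
      = jacA f xt (a t) j i := by
    intro j
    have hcomp : HasFDerivAt (fun b => f (xt, b) j)
        ((ContinuousLinearMap.proj (R := ℝ) (φ := fun _ : Fin n => ℝ) j).comp Df) (a t) :=
      (ContinuousLinearMap.proj (R := ℝ) (φ := fun _ : Fin n => ℝ) j).hasFDerivAt.comp
        (a t) hDfat
    show _ = fderiv ℝ (fun b => f (xt, b) j) (a t) (Pi.single i 1)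
    rw [hcomp.fderiv]
    rfl
  have hDRdecomp : DR (Df (Pi.single i 1))
      = ∑ j : Fin n, Df (Pi.single i 1) j * DR (Pi.single j 1) := by
    conv_lhs => rw [← Finset.univ_sum_single (Df (Pi.single i 1))]
    rw [map_sum]
    apply Finset.sum_congr rfl
    intro j _
    have hsingle : (Pi.single j (Df (Pi.single i 1) j) : Fin n → ℝ)
        = (Df (Pi.single i 1) j) • (Pi.single j 1 : Fin n → ℝ) := by
      funext s
      rcases eq_or_ne s j with h | h
      · subst h; simp
      · simp [Pi.single_eq_of_ne h]
    rw [hsingle]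
    simp
  simp only [ContinuousLinearMap.add_apply, ContinuousLinearMap.smul_apply,
    ContinuousLinearMap.comp_apply, smul_eq_mul, Pi.smul_apply, Pi.add_apply,
    Matrix.mulVec, Matrix.transpose_apply, dotProduct]
  rw [hDRdecomp]
  have hgradA : gradA r xt (a t) i = D1 (Pi.single i 1) := rfl
  have hgrad : ∀ j : Fin n, grad (R ((t : ℕ) + 1)) (traj f x₀ (pad a) ((t : ℕ) + 1)) j
      = DR (Pi.single j 1) := by
    intro j
    rw [grad, hx1, hDR]
  rw [hgradA]
  simp only [hgrad, hDfcomp]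
  rw [pow_succ]
  ring
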